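/- Let n ≥ k ≥ ℓ ≥ 1 be integers, let T be a family of sub-measurements of arity k, let V be a family of sub-measurements of arity ℓ, and let {Z_{x_{>k}}^h} (x_{>k} ∈ F^{n−k}, h ∈ ML(F^k,F)) be d×d complex matrices such that E_{x_{>k}∈F^{n−k}} Σ_h Z_{x_{>k}}^h (Z_{x_{>k}}^h)† ≤ Id. Then |E_{x∈F^n} Σ_{h∈ML(F^k,F)} Tr_ρ(Z_{x_{>k}}^h T_{x_{>k}}^h ⊗ V_{x_{>ℓ}}) − E_{x∈F^n} Σ_{(g,h): g = h(·,x_{ℓ+1},…,x_k)} Tr_ρ(Z_{x_{>k}}^h T_{x_{>k}}^h ⊗ V_{x_{>ℓ}}^g)| ≤ √(inc(T,V)), where V_{x_{>ℓ}} := Σ_{g∈ML(F^ℓ,F)} V_{x_{>ℓ}}^g. -/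

import Mathlib

open scoped Kronecker ComplexConjugate ComplexOrder Matrix

namespace MIP

noncomputable section

abbrev Mat (d : ℕ) := Matrix (Fin d) (Fin d) ℂ

/-- Real part of the trace. -/
def rTr {m : Type*} [Fintype m] (M : Matrix m m ℂ) : ℝ := M.trace.re

/-- Positive semidefinite square root (`0` if the matrix is not PSD). -/
def psqrt {m : Type*} [Fintype m] [DecidableEq m] (A : Matrix m m ℂ) : Matrix m m ℂ :=
  letI := Classical.propDecidable A.PosSemidef
  if h : A.PosSemidef then
    h.1.eigenvectorUnitary.1 * Matrix.diagonal ((↑) ∘ (√·) ∘ h.1.eigenvalues) *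
      (star h.1.eigenvectorUnitary : Matrix m m ℂ)
  else 0

/-- Loewner order `A ≤ B`. -/
def PSDle {m : Type*} [Fintype m] (A B : Matrix m m ℂ) : Prop := (B - A).PosSemidef

/-- Trace norm of a square complex matrix. -/
def traceNorm {m : Type*} [Fintype m] [DecidableEq m] (M : Matrix m m ℂ) : ℝ :=
  rTr (psqrt (Mᴴ * M))

/-- `‖X‖_ρ² = Tr (X Xᴴ ρ)`. -/
def rhoNormSq {d : ℕ} (ρ X : Mat d) : ℝ := rTr (X * Xᴴ * ρ)

/-- `⟨ψ| M 0 ⊗ ⋯ ⊗ M (r-1) |ψ⟩` (real part). -/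
def tExp {r d : ℕ} (ψ : (Fin r → Fin d) → ℂ) (M : Fin r → Mat d) : ℝ :=
  (∑ v : Fin r → Fin d, ∑ w : Fin r → Fin d,
      conj (ψ v) * (∏ i, M i (v i) (w i)) * ψ w).re

/-- `⟨ψ| M 0 ⊗ ⋯ ⊗ M (r-1) |ψ⟩` (complex value). -/
def tExpC {r d : ℕ} (ψ : (Fin r → Fin d) → ℂ) (M : Fin r → Mat d) : ℂ :=
  ∑ v : Fin r → Fin d, ∑ w : Fin r → Fin d,
      conj (ψ v) * (∏ i, M i (v i) (w i)) * ψ w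

/-- Invariance of a vector in `(ℂ^d)^{⊗r}` under all permutations of the factors. -/
def PermInvariant {r d : ℕ} (ψ : (Fin r → Fin d) → ℂ) : Prop :=
  ∀ σ : Equiv.Perm (Fin r), ∀ v, ψ (v ∘ σ) = ψ v

/-- Reduced density matrix of `|ψ⟩⟨ψ|` on register `i`. -/
def red1 {r d : ℕ} (ψ : (Fin r → Fin d) → ℂ) (i : Fin r) : Mat d :=
  Matrix.of fun j k => ∑ v : Fin r → Fin d,
    if (v i).val = 0 then ψ (Function.update v i j) * conj (ψ (Function.update v i k)) else 0

/-- Reduced density matrix of `|ψ⟩⟨ψ|` on registers `i₁, i₂`. -/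
def red2 {r d : ℕ} (ψ : (Fin r → Fin d) → ℂ) (i₁ i₂ : Fin r) :
    Matrix (Fin d × Fin d) (Fin d × Fin d) ℂ :=
  Matrix.of fun a b => ∑ v : Fin r → Fin d,
    if (v i₁).val = 0 ∧ (v i₂).val = 0 then
      ψ (Function.update (Function.update v i₁ a.1) i₂ a.2) *
        conj (ψ (Function.update (Function.update v i₁ b.1) i₂ b.2))
    else 0

/-- A symmetric projective strategy with `r` provers, questions in `F^n`,
answers in `F`, on local dimension `d`. -/
structure Strategy (r n d : ℕ) (F : Type*) [Field F] [Fintype F] where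
  ψ : (Fin r → Fin d) → ℂ
  A : (Fin n → F) → F → Mat d
  unit : ∑ v : Fin r → Fin d, Complex.normSq (ψ v) = 1
  perm : PermInvariant ψ
  herm : ∀ x a, (A x a).IsHermitian
  proj : ∀ x a, A x a * A x a = A x a
  complete : ∀ x, ∑ a : F, A x a = 1

variable {F : Type*} [Field F] [Fintype F] [DecidableEq F]

/-- Consistency-test acceptance probability. -/
def consProb {r n d : ℕ} (S : Strategy r n d F) : ℝ :=
  (∑ x : Fin n → F, ∑ a : F, tExp S.ψ fun _ => S.A x a) / (Fintype.card F : ℝ) ^ n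

/-- Linearity-test acceptance probability in direction `i`. -/
def linProbDir {r n d : ℕ} (S : Strategy r n d F) (i : Fin n) : ℝ :=
  (∑ x : Fin n → F, ∑ yi : F, ∑ zi : F,
      if yi ≠ x i ∧ zi ≠ x i ∧ yi ≠ zi then
        ∑ α : F, ∑ β : F,
          tExp S.ψ fun j =>
            if j.val = 0 then S.A x (α * x i + β)
            else if j.val = 1 then S.A (Function.update x i yi) (α * yi + β)
            else if j.val = 2 then S.A (Function.update x i zi) (α * zi + β)
            else 1
      else 0) /
    ((Fintype.card F : ℝ) ^ n * ((Fintype.card F : ℝ) - 1) * ((Fintype.card F : ℝ) - 2))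

/-- Linearity-test acceptance probability (averaged over the direction). -/
def linProb {r n d : ℕ} (S : Strategy r n d F) : ℝ :=
  (∑ i : Fin n, linProbDir S i) / n

/-- A multilinear function `F^k → F`. -/
def IsMultilinear {k : ℕ} (g : (Fin k → F) → F) : Prop :=
  ∀ (i : Fin k) (x : Fin k → F), ∃ α β : F, ∀ t : F, g (Function.update x i t) = α * t + β

/-- First `k` coordinates `x_{≤k}`. -/
def xle {n k : ℕ} (hk : k ≤ n) (x : Fin n → F) : Fin k → F :=
  fun j => x (Fin.castLE hk j)

/-- Last `n - k` coordinates `x_{>k}`. -/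
def xgt {n : ℕ} (k : ℕ) (hk : k ≤ n) (x : Fin n → F) : Fin (n - k) → F :=
  fun j => x ⟨k + j.val, by have := j.isLt; omega⟩

/-- The restriction `g(·, x_{k+1},…,x_ℓ)` of `g : F^ℓ → F` to its first `k` variables, the last
`ℓ - k` variables being substituted with the corresponding coordinates of `x ∈ F^n`. -/
def midRestrict {n k ℓ : ℕ} (hkl : k ≤ ℓ) (hl : ℓ ≤ n) (g : (Fin ℓ → F) → F) (x : Fin n → F) :
    (Fin k → F) → F :=
  fun u => g fun j =>
    if h : j.val < k then u ⟨j.val, h⟩ else x ⟨j.val, by have := j.isLt; omega⟩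

/-- A family of sub-measurements of arity `k`, with outcomes the multilinear functions
`F^k → F` (the matrices are indexed by all functions, vanishing on non-multilinear ones). -/
structure SubFamily (n d : ℕ) (F : Type*) [Field F] [Fintype F] [DecidableEq F] (k : ℕ) where
  P : (Fin (n - k) → F) → ((Fin k → F) → F) → Mat d
  psd : ∀ y g, (P y g).PosSemidef
  ml : ∀ y g, ¬ IsMultilinear g → P y g = 0
  sub : ∀ y, (1 - ∑ g : (Fin k → F) → F, P y g).PosSemidef

/-- `cons(P,Q)` for arities `k ≤ ℓ`. -/
def consF {n d k ℓ : ℕ} (hkl : k ≤ ℓ) (hl : ℓ ≤ n)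
    (P : SubFamily n d F k) (Q : SubFamily n d F ℓ)
    (ρ : Matrix (Fin d × Fin d) (Fin d × Fin d) ℂ) : ℝ :=
  (∑ x : Fin n → F, ∑ f : (Fin k → F) → F, ∑ g : (Fin ℓ → F) → F,
      if f = midRestrict hkl hl g x then
        rTr ((P.P (xgt k (hkl.trans hl) x) f ⊗ₖ Q.P (xgt ℓ hl x) g) * ρ)
      else 0) / (Fintype.card F : ℝ) ^ n

/-- `inc(P,Q)` for arities `k ≤ ℓ`. -/
def incF {n d k ℓ : ℕ} (hkl : k ≤ ℓ) (hl : ℓ ≤ n)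
    (P : SubFamily n d F k) (Q : SubFamily n d F ℓ)
    (ρ : Matrix (Fin d × Fin d) (Fin d × Fin d) ℂ) : ℝ :=
  (∑ x : Fin n → F, ∑ f : (Fin k → F) → F, ∑ g : (Fin ℓ → F) → F,
      if f ≠ midRestrict hkl hl g x then
        rTr ((P.P (xgt k (hkl.trans hl) x) f ⊗ₖ Q.P (xgt ℓ hl x) g) * ρ)
      else 0) / (Fintype.card F : ℝ) ^ n

/-- `cons(P,Q)` for arbitrary arities (symmetric convention). -/
def consSym {n d k ℓ : ℕ} (hk : k ≤ n) (hl : ℓ ≤ n)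
    (P : SubFamily n d F k) (Q : SubFamily n d F ℓ)
    (ρ : Matrix (Fin d × Fin d) (Fin d × Fin d) ℂ) : ℝ :=
  if h : k ≤ ℓ then consF h hl P Q ρ else consF (le_of_not_ge h) hk Q P ρ

/-- `inc(P,A)` where `A` are the strategy's measurements (regarded as the arity-0 family). -/
def incA {n d k : ℕ} (hk : k ≤ n) (P : SubFamily n d F k)
    (A : (Fin n → F) → F → Mat d) (ρ : Matrix (Fin d × Fin d) (Fin d × Fin d) ℂ) : ℝ :=
  (∑ x : Fin n → F, ∑ g : (Fin k → F) → F, ∑ a : F,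
      if a ≠ g (xle hk x) then rTr ((P.P (xgt k hk x) g ⊗ₖ A x a) * ρ) else 0) /
    (Fintype.card F : ℝ) ^ n

/-- `Tr_ρ(P)` for a family of sub-measurements, against the one-register density `ρ`. -/
def trF {n d k : ℕ} (P : SubFamily n d F k) (ρ : Mat d) : ℝ :=
  (∑ y : Fin (n - k) → F, ∑ g : (Fin k → F) → F, rTr (P.P y g * ρ)) /
    (Fintype.card F : ℝ) ^ (n - k)

/-- Merge first `k` coordinates `u` and last `n - k` coordinates `y` into a point of `F^n`. -/
def merge {n k : ℕ} (hk : k ≤ n) (u : Fin k → F) (y : Fin (n - k) → F) : Fin n → F :=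
  fun j => if h : j.val < k then u ⟨j.val, h⟩ else y ⟨j.val - k, by have := j.isLt; omega⟩

/-- `E_{x_{≤k}} Ŝ_x^g`, with the last coordinates fixed to `y`. -/
def avgLow {n d k : ℕ} (hk : k ≤ n)
    (Sh : (Fin n → F) → ((Fin k → F) → F) → Mat d)
    (y : Fin (n - k) → F) (g : (Fin k → F) → F) : Mat d :=
  ((Fintype.card F : ℂ) ^ k)⁻¹ • ∑ u : Fin k → F, Sh (merge hk u y) g

/-- Feasibility for the self-improvement convex program. -/
def Feasible {n d k : ℕ} (hk : k ≤ n) (A : (Fin n → F) → F → Mat d)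
    (Sh : (Fin n → F) → ((Fin k → F) → F) → Mat d) : Prop :=
  (∀ x g, ¬ IsMultilinear g → Sh x g = 0) ∧
    ∀ x a, PSDle (∑ g : (Fin k → F) → F,
      if g (xle hk x) = a then Sh x g * (Sh x g)ᴴ else 0) (A x a)

/-- Objective of the self-improvement convex program. -/
def objective {n d k : ℕ} (hk : k ≤ n) (R : SubFamily n d F k) (ρ : Mat d)
    (Sh : (Fin n → F) → ((Fin k → F) → F) → Mat d) : ℝ :=
  (∑ x : Fin n → F, ∑ g : (Fin k → F) → F,
      rhoNormSq ρ (Sh x g - psqrt (R.P (xgt k hk x) g))) / (Fintype.card F : ℝ) ^ n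

/-- Optimum value `ω` of the self-improvement convex program. -/
def progOpt {n d k : ℕ} (hk : k ≤ n) (A : (Fin n → F) → F → Mat d)
    (R : SubFamily n d F k) (ρ : Mat d) : ℝ :=
  sInf {w | ∃ Sh, Feasible hk A Sh ∧ objective hk R ρ Sh = w}


/-- Remove the `i`-th coordinate: `x_{¬i}`. -/
def removeCoord {n : ℕ} (i : Fin n) (x : Fin n → F) : Fin (n - 1) → F :=
  fun j => if h : j.val < i.val then x ⟨j.val, by have := j.isLt; omega⟩
    else x ⟨j.val + 1, by have := j.isLt; omega⟩

/-- Partial trace over the middle factor of `ℂ^d ⊗ ℂ^d ⊗ ℂ^{d'}`. -/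
def ptrace2 {d d' : ℕ} (σ : Matrix (Fin d × Fin d × Fin d') (Fin d × Fin d × Fin d') ℂ) :
    Matrix (Fin d × Fin d') (Fin d × Fin d') ℂ :=
  Matrix.of fun a b => ∑ m : Fin d, σ (a.1, m, a.2) (b.1, m, b.2)

/-- Partial trace over the first factor of `ℂ^d ⊗ ℂ^{d'}`. -/
def ptrFst {d d' : ℕ} (σ : Matrix (Fin d × Fin d') (Fin d × Fin d') ℂ) :
    Matrix (Fin d') (Fin d') ℂ :=
  Matrix.of fun k l => ∑ m : Fin d, σ (m, k) (m, l)

/-- Partial trace over the second factor of `ℂ^d ⊗ ℂ^{d'}`. -/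
def ptrSnd {d d' : ℕ} (σ : Matrix (Fin d × Fin d') (Fin d × Fin d') ℂ) : Mat d :=
  Matrix.of fun i j => ∑ m : Fin d', σ (i, m) (j, m)



section CSHelpers
set_option linter.unusedSectionVars false
variable {ι κ : Type*} [Fintype ι] [DecidableEq ι] [Fintype κ] [DecidableEq κ]

lemma psqrt_eq {A : Matrix ι ι ℂ} (hA : A.PosSemidef) : psqrt A =
    hA.1.eigenvectorUnitary.1 * Matrix.diagonal ((↑) ∘ (√·) ∘ hA.1.eigenvalues) *
      (star hA.1.eigenvectorUnitary : Matrix ι ι ℂ) := by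
  rw [psqrt]
  exact dif_pos hA

lemma psqrt_mul_self {A : Matrix ι ι ℂ} (hA : A.PosSemidef) : psqrt A * psqrt A = A := by
  rw [psqrt_eq hA]
  have hU := Unitary.coe_star_mul_self hA.1.eigenvectorUnitary
  have hD : Matrix.diagonal (((↑) ∘ (√·) ∘ hA.1.eigenvalues) : ι → ℂ) *
      Matrix.diagonal (((↑) ∘ (√·) ∘ hA.1.eigenvalues) : ι → ℂ) =
      Matrix.diagonal (RCLike.ofReal ∘ hA.1.eigenvalues : ι → ℂ) := by
    rw [Matrix.diagonal_mul_diagonal]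
    congr 1
    funext i
    simp only [Function.comp_apply]
    rw [← Complex.ofReal_mul, Real.mul_self_sqrt (hA.eigenvalues_nonneg i)]
    rfl
  conv_rhs => rw [hA.1.spectral_theorem, Unitary.conjStarAlgAut_apply]
  rw [← hD]
  set U : Matrix ι ι ℂ := (hA.1.eigenvectorUnitary : Matrix ι ι ℂ)
  set sU : Matrix ι ι ℂ := (star hA.1.eigenvectorUnitary : Matrix ι ι ℂ)
  set D : Matrix ι ι ℂ := Matrix.diagonal (((↑) ∘ (√·) ∘ hA.1.eigenvalues) : ι → ℂ)
  rw [show U * D * sU * (U * D * sU) = U * D * (sU * U) * D * sU by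
    simp only [Matrix.mul_assoc], hU, Matrix.mul_one]
  simp only [Matrix.mul_assoc]

lemma psqrt_conjT {A : Matrix ι ι ℂ} (hA : A.PosSemidef) : (psqrt A)ᴴ = psqrt A := by
  rw [psqrt_eq hA, Matrix.conjTranspose_mul, Matrix.conjTranspose_mul,
    Matrix.diagonal_conjTranspose]
  simp [Matrix.mul_assoc, Matrix.star_eq_conjTranspose]
  congr 3
  funext i
  simp

lemma psqrt_posSemidef {A : Matrix ι ι ℂ} (hA : A.PosSemidef) : (psqrt A).PosSemidef := by
  rw [psqrt_eq hA]
  have hd : (Matrix.diagonal (((↑) ∘ (√·) ∘ hA.1.eigenvalues) : ι → ℂ)).PosSemidef :=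
    Matrix.posSemidef_diagonal_iff.mpr fun i => Complex.zero_le_real.mpr (Real.sqrt_nonneg _)
  convert hd.mul_mul_conjTranspose_same (hA.1.eigenvectorUnitary : Matrix ι ι ℂ) using 2
  exact Matrix.star_eq_conjTranspose _

lemma psd_factor {M : Matrix ι ι ℂ} (hM : M.PosSemidef) : ∃ B : Matrix ι ι ℂ, M = Bᴴ * B :=
  ⟨psqrt M, by rw [psqrt_conjT hM, psqrt_mul_self hM]⟩


lemma trace_ctm (B : Matrix ι ι ℂ) :
    (Bᴴ * B).trace = ((∑ i, ∑ j, Complex.normSq (B j i) : ℝ) : ℂ) := by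
  simp only [Matrix.trace, Matrix.diag, Matrix.mul_apply, Matrix.conjTranspose_apply]
  push_cast
  congr 1 with i
  congr 1 with j
  rw [Complex.normSq_eq_conj_mul_self, RCLike.star_def]

lemma rTr_psd_nonneg {M : Matrix ι ι ℂ} (hM : M.PosSemidef) : 0 ≤ rTr M := by
  obtain ⟨B, rfl⟩ := psd_factor hM
  rw [rTr, trace_ctm, Complex.ofReal_re]
  exact Finset.sum_nonneg fun i _ => Finset.sum_nonneg fun j _ => Complex.normSq_nonneg _

lemma rTr_mul_psd_nonneg {M ρ : Matrix ι ι ℂ} (hM : M.PosSemidef) (hρ : ρ.PosSemidef) :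
    0 ≤ rTr (M * ρ) := by
  obtain ⟨B, rfl⟩ := psd_factor hM
  rw [rTr, Matrix.mul_assoc, Matrix.trace_mul_comm, ← rTr]
  exact rTr_psd_nonneg (hρ.mul_mul_conjTranspose_same B)

lemma rTr_sub (M N : Matrix ι ι ℂ) : rTr (M - N) = rTr M - rTr N := by
  simp [rTr, Matrix.trace_sub, Complex.sub_re]

lemma rTr_mul_mono {M N ρ : Matrix ι ι ℂ} (hρ : ρ.PosSemidef) (h : (N - M).PosSemidef) :
    rTr (M * ρ) ≤ rTr (N * ρ) := by
  have := rTr_mul_psd_nonneg h hρ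
  rw [Matrix.sub_mul, rTr_sub] at this
  linarith

lemma kron_conjT (A : Matrix ι ι ℂ) (B : Matrix κ κ ℂ) : (A ⊗ₖ B)ᴴ = Aᴴ ⊗ₖ Bᴴ := by
  ext ⟨i, j⟩ ⟨a, b⟩
  simp [Matrix.conjTranspose_apply, Matrix.kroneckerMap_apply]

lemma kron_psd {A : Matrix ι ι ℂ} {B : Matrix κ κ ℂ} (hA : A.PosSemidef) (hB : B.PosSemidef) :
    (A ⊗ₖ B).PosSemidef := by
  obtain ⟨C, rfl⟩ := psd_factor hA
  obtain ⟨D, rfl⟩ := psd_factor hB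
  rw [Matrix.mul_kronecker_mul, ← kron_conjT]
  exact Matrix.posSemidef_conjTranspose_mul_self _

lemma kron_sum_right {γ : Type*} (M : Matrix ι ι ℂ) (s : Finset γ) (f : γ → Matrix κ κ ℂ) :
    M ⊗ₖ (∑ g ∈ s, f g) = ∑ g ∈ s, M ⊗ₖ f g := by
  ext ⟨i, j⟩ ⟨a, b⟩
  simp [Matrix.kroneckerMap_apply, Matrix.sum_apply, Finset.mul_sum]

lemma kron_sum_left {γ : Type*} (M : Matrix ι ι ℂ) (s : Finset γ) (f : γ → Matrix κ κ ℂ) :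
    (∑ g ∈ s, f g) ⊗ₖ M = ∑ g ∈ s, f g ⊗ₖ M := by
  ext ⟨i, j⟩ ⟨a, b⟩
  simp [Matrix.kroneckerMap_apply, Matrix.sum_apply, Finset.sum_mul]

lemma kron_sub_right (M : Matrix ι ι ℂ) (A B : Matrix κ κ ℂ) :
    M ⊗ₖ (A - B) = M ⊗ₖ A - M ⊗ₖ B := by
  ext ⟨i, j⟩ ⟨a, b⟩
  simp [Matrix.kroneckerMap_apply, mul_sub]

lemma kron_sub_left (M : Matrix ι ι ℂ) (A B : Matrix κ κ ℂ) :
    (A - B) ⊗ₖ M = A ⊗ₖ M - B ⊗ₖ M := by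
  ext ⟨i, j⟩ ⟨a, b⟩
  simp [Matrix.kroneckerMap_apply, sub_mul]

lemma rTr_real_smul (r : ℝ) (M : Matrix ι ι ℂ) : rTr ((r : ℂ) • M) = r * rTr M := by
  simp [rTr, Matrix.trace_smul, smul_eq_mul, Complex.mul_re]

lemma smul_kron (c : ℂ) (M : Matrix ι ι ℂ) (B : Matrix κ κ ℂ) :
    (c • M) ⊗ₖ B = c • (M ⊗ₖ B) := by
  ext ⟨i, j⟩ ⟨a, b⟩
  simp [Matrix.kroneckerMap_apply, mul_assoc]

lemma rTr_sum {γ : Type*} (s : Finset γ) (f : γ → Matrix ι ι ℂ) :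
    rTr (∑ g ∈ s, f g) = ∑ g ∈ s, rTr (f g) := by
  simp [rTr, Matrix.trace_sum, Complex.re_sum]


lemma trace_form_eq {ρ : Matrix ι ι ℂ} (hρ : ρ.PosSemidef) (X Y : Matrix ι ι ℂ) :
    (X * Yᴴ * ρ).trace = ∑ j, ∑ m, (psqrt ρ * X) j m * conj ((psqrt ρ * Y) j m) := by
  conv_lhs => rw [← psqrt_mul_self hρ]
  rw [← Matrix.mul_assoc, Matrix.trace_mul_comm]
  have : psqrt ρ * (X * Yᴴ * psqrt ρ) = (psqrt ρ * X) * (psqrt ρ * Y)ᴴ := by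
    rw [Matrix.conjTranspose_mul, psqrt_conjT hρ]
    noncomm_ring
  rw [this]
  simp [Matrix.trace, Matrix.diag, Matrix.mul_apply, Matrix.conjTranspose_apply, mul_comm]

lemma cs_rho {ρ : Matrix ι ι ℂ} (hρ : ρ.PosSemidef) (A B : κ → Matrix ι ι ℂ) :
    |∑ c, rTr (A c * (B c)ᴴ * ρ)| ≤
      Real.sqrt (∑ c, rTr (A c * (A c)ᴴ * ρ)) *
        Real.sqrt (∑ c, rTr (B c * (B c)ᴴ * ρ)) := by
  set σ := psqrt ρ with hσ
  set a : κ × ι × ι → ℂ := fun p => (σ * A p.1) p.2.1 p.2.2 with ha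
  set b : κ × ι × ι → ℂ := fun p => (σ * B p.1) p.2.1 p.2.2 with hb
  have hS : ∑ c, rTr (A c * (B c)ᴴ * ρ) = (∑ p : κ × ι × ι, a p * conj (b p)).re := by
    simp only [Fintype.sum_prod_type, ha, hb, Complex.re_sum, rTr, trace_form_eq hρ, hσ]
  have hP : ∑ c, rTr (A c * (A c)ᴴ * ρ) = ∑ p : κ × ι × ι, ‖a p‖ ^ 2 := by
    simp only [Fintype.sum_prod_type, ha, Complex.re_sum, rTr, trace_form_eq hρ, hσ,
      Complex.mul_conj, Complex.ofReal_re, Complex.sq_norm]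
  have hQ : ∑ c, rTr (B c * (B c)ᴴ * ρ) = ∑ p : κ × ι × ι, ‖b p‖ ^ 2 := by
    simp only [Fintype.sum_prod_type, hb, Complex.re_sum, rTr, trace_form_eq hρ, hσ,
      Complex.mul_conj, Complex.ofReal_re, Complex.sq_norm]
  rw [hS, hP, hQ]
  calc |(∑ p : κ × ι × ι, a p * conj (b p)).re|
      ≤ ‖∑ p : κ × ι × ι, a p * conj (b p)‖ := Complex.abs_re_le_norm _
    _ ≤ ∑ p : κ × ι × ι, ‖a p * conj (b p)‖ := by
        exact
          norm_sum_le Finset.univ (fun p : κ × ι × ι => a p * conj (b p))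
    _ = ∑ p : κ × ι × ι, ‖a p‖ * ‖b p‖ := by
        congr 1 with p
        rw [norm_mul, Complex.norm_conj]
    _ ≤ Real.sqrt (∑ p : κ × ι × ι, ‖a p‖ ^ 2) *
          Real.sqrt (∑ p : κ × ι × ι, ‖b p‖ ^ 2) := by
        rw [← Real.sqrt_mul (Finset.sum_nonneg fun p _ => sq_nonneg _)]
        have h1 : 0 ≤ ∑ p : κ × ι × ι, ‖a p‖ * ‖b p‖ :=
          Finset.sum_nonneg fun p _ => mul_nonneg (norm_nonneg _)
            (norm_nonneg _)
        have h2 : 0 ≤ (∑ p : κ × ι × ι, ‖a p‖ ^ 2) *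
            ∑ p : κ × ι × ι, ‖b p‖ ^ 2 :=
          mul_nonneg (Finset.sum_nonneg fun p _ => sq_nonneg _)
            (Finset.sum_nonneg fun p _ => sq_nonneg _)
        exact (Real.le_sqrt h1 h2).mpr (Finset.sum_mul_sq_le_sq_mul_sq _ _ _)



lemma psd_sum {γ : Type*} (s : Finset γ) (f : γ → Matrix ι ι ℂ)
    (h : ∀ g ∈ s, (f g).PosSemidef) : (∑ g ∈ s, f g).PosSemidef :=
  Finset.sum_induction f _ (fun _ _ ha hb => ha.add hb) Matrix.PosSemidef.zero h

lemma key1 {d : ℕ} (Z T0 V0 : Mat d) (hT : T0.PosSemidef) (hV : V0.PosSemidef) :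
    ((Z * psqrt T0) ⊗ₖ psqrt V0) * ((psqrt T0) ⊗ₖ psqrt V0)ᴴ = (Z * T0) ⊗ₖ V0 := by
  rw [kron_conjT, psqrt_conjT hT, psqrt_conjT hV, ← Matrix.mul_kronecker_mul,
    Matrix.mul_assoc, psqrt_mul_self hT, psqrt_mul_self hV]

lemma key2 {d : ℕ} (Z T0 V0 : Mat d) (hT : T0.PosSemidef) (hV : V0.PosSemidef) :
    ((Z * psqrt T0) ⊗ₖ psqrt V0) * ((Z * psqrt T0) ⊗ₖ psqrt V0)ᴴ = (Z * T0 * Zᴴ) ⊗ₖ V0 := by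
  rw [kron_conjT, psqrt_conjT hV, Matrix.conjTranspose_mul, psqrt_conjT hT,
    ← Matrix.mul_kronecker_mul, psqrt_mul_self hV]
  congr 1
  rw [Matrix.mul_assoc, ← Matrix.mul_assoc (psqrt T0), psqrt_mul_self hT, ← Matrix.mul_assoc]

lemma key3 {d : ℕ} (T0 V0 : Mat d) (hT : T0.PosSemidef) (hV : V0.PosSemidef) :
    ((psqrt T0) ⊗ₖ psqrt V0) * ((psqrt T0) ⊗ₖ psqrt V0)ᴴ = T0 ⊗ₖ V0 := by
  rw [kron_conjT, psqrt_conjT hT, psqrt_conjT hV, ← Matrix.mul_kronecker_mul,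
    psqrt_mul_self hT, psqrt_mul_self hV]

end CSHelpers

section MergeHelpers
variable {F : Type*} [Field F] [Fintype F] [DecidableEq F]

/-- The merge equivalence. -/
def mergeEquiv {n k : ℕ} (hk : k ≤ n) : ((Fin k → F) × (Fin (n - k) → F)) ≃ (Fin n → F) where
  toFun p := merge hk p.1 p.2
  invFun x := (xle hk x, xgt k hk x)
  left_inv := by
    rintro ⟨u, y⟩
    refine Prod.ext ?_ ?_
    · funext j
      simp only [merge, xle, Fin.castLE]
      rw [dif_pos j.isLt]
    · funext j
      simp only [merge, xgt]
      rw [dif_neg (by omega)]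
      congr 1
      exact Fin.ext (by simp)
  right_inv := by
    intro x
    funext j
    by_cases h : j.val < k
    · simp only [merge, xle, dif_pos h]
      congr 1
    · simp only [merge, xgt, dif_neg h]
      congr 1
      exact Fin.ext (by simp; omega)

lemma sum_xgt {n k : ℕ} (hk : k ≤ n) (f : (Fin (n - k) → F) → ℝ) :
    ∑ x : Fin n → F, f (xgt k hk x) =
      (Fintype.card F : ℝ) ^ k * ∑ y : Fin (n - k) → F, f y := by
  rw [← Equiv.sum_comp (mergeEquiv (F := F) hk) (fun x => f (xgt k hk x))]
  have : ∀ p : (Fin k → F) × (Fin (n - k) → F),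
      f (xgt k hk (mergeEquiv (F := F) hk p)) = f p.2 := by
    intro p
    congr 1
    exact congrArg Prod.snd ((mergeEquiv (F := F) hk).left_inv p)
  simp_rw [this]
  rw [Fintype.sum_prod_type]
  simp only [Finset.sum_const, Finset.card_univ, nsmul_eq_mul, Fintype.card_fun,
    Fintype.card_fin]
  push_cast
  ring

lemma one_sub_single_psd {n d k : ℕ} (T : SubFamily n d F k) (y : Fin (n - k) → F)
    (h : (Fin k → F) → F) : ((1 : Mat d) - T.P y h).PosSemidef := by
  have h2 : (∑ g ∈ Finset.univ.erase h, T.P y g).PosSemidef :=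
    psd_sum _ _ (fun g _ => T.psd y g)
  have e : (1 : Mat d) - T.P y h =
      (1 - ∑ g : (Fin k → F) → F, T.P y g) + ∑ g ∈ Finset.univ.erase h, T.P y g := by
    rw [Finset.sum_erase_eq_sub (Finset.mem_univ h)]
    abel
  rw [e]
  exact (T.sub y).add h2

end MergeHelpers


theorem statement14 (n d k l : ℕ) (F : Type) [Field F] [Fintype F] [DecidableEq F]
    (hl1 : 1 ≤ l) (hlk : l ≤ k) (hkn : k ≤ n)
    (ρ : Matrix (Fin d × Fin d) (Fin d × Fin d) ℂ)
    (T : SubFamily n d F k) (V : SubFamily n d F l)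
    (Z : (Fin (n - k) → F) → ((Fin k → F) → F) → Mat d)
    (hρ : ρ.PosSemidef) (hρ1 : rTr ρ ≤ 1)
    (hZ : PSDle (((Fintype.card F : ℂ) ^ (n - k))⁻¹ •
      ∑ y : Fin (n - k) → F, ∑ h : (Fin k → F) → F, Z y h * (Z y h)ᴴ) 1) :
    |(∑ x : Fin n → F, ∑ h : (Fin k → F) → F,
          rTr (((Z (xgt k hkn x) h * T.P (xgt k hkn x) h) ⊗ₖ
            (∑ g : (Fin l → F) → F, V.P (xgt l (hlk.trans hkn) x) g)) * ρ)) /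
        (Fintype.card F : ℝ) ^ n -
      (∑ x : Fin n → F, ∑ h : (Fin k → F) → F, ∑ g : (Fin l → F) → F,
          if g = midRestrict hlk hkn h x then
            rTr (((Z (xgt k hkn x) h * T.P (xgt k hkn x) h) ⊗ₖ
              V.P (xgt l (hlk.trans hkn) x) g) * ρ)
          else 0) / (Fintype.card F : ℝ) ^ n| ≤
      Real.sqrt ((∑ x : Fin n → F, ∑ h : (Fin k → F) → F, ∑ g : (Fin l → F) → F,
          if g ≠ midRestrict hlk hkn h x then
            rTr ((T.P (xgt k hkn x) h ⊗ₖ V.P (xgt l (hlk.trans hkn) x) g) * ρ)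
          else 0) / (Fintype.card F : ℝ) ^ n) := by
  classical
  have cardF : (0:ℝ) < (Fintype.card F : ℝ) := by exact_mod_cast Fintype.card_pos
  have hq : (0:ℝ) < (Fintype.card F : ℝ) ^ n := pow_pos cardF n
  have expand : ∀ (x : Fin n → F) (h : (Fin k → F) → F),
      rTr (((Z (xgt k hkn x) h * T.P (xgt k hkn x) h) ⊗ₖ
        (∑ g : (Fin l → F) → F, V.P (xgt l (hlk.trans hkn) x) g)) * ρ) =
      ∑ g : (Fin l → F) → F,
        rTr (((Z (xgt k hkn x) h * T.P (xgt k hkn x) h) ⊗ₖ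
          V.P (xgt l (hlk.trans hkn) x) g) * ρ) := by
    intro x h
    rw [kron_sum_right, Finset.sum_mul, rTr_sum]
  set AA : ((Fin n → F) × ((Fin k → F) → F) × ((Fin l → F) → F)) →
      Matrix (Fin d × Fin d) (Fin d × Fin d) ℂ := fun c =>
    if c.2.2 = midRestrict hlk hkn c.2.1 c.1 then 0 else
      (Z (xgt k hkn c.1) c.2.1 * psqrt (T.P (xgt k hkn c.1) c.2.1)) ⊗ₖ
        psqrt (V.P (xgt l (hlk.trans hkn) c.1) c.2.2) with hAA
  set BB : ((Fin n → F) × ((Fin k → F) → F) × ((Fin l → F) → F)) →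
      Matrix (Fin d × Fin d) (Fin d × Fin d) ℂ := fun c =>
    if c.2.2 = midRestrict hlk hkn c.2.1 c.1 then 0 else
      psqrt (T.P (xgt k hkn c.1) c.2.1) ⊗ₖ
        psqrt (V.P (xgt l (hlk.trans hkn) c.1) c.2.2) with hBB
  have hcs := cs_rho hρ AA BB
  have eAB : ∑ c, rTr (AA c * (BB c)ᴴ * ρ) =
      (∑ x : Fin n → F, ∑ h : (Fin k → F) → F,
          rTr (((Z (xgt k hkn x) h * T.P (xgt k hkn x) h) ⊗ₖ
            (∑ g : (Fin l → F) → F, V.P (xgt l (hlk.trans hkn) x) g)) * ρ)) -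
      (∑ x : Fin n → F, ∑ h : (Fin k → F) → F, ∑ g : (Fin l → F) → F,
          if g = midRestrict hlk hkn h x then
            rTr (((Z (xgt k hkn x) h * T.P (xgt k hkn x) h) ⊗ₖ
              V.P (xgt l (hlk.trans hkn) x) g) * ρ)
          else 0) := by
    simp_rw [expand]
    rw [← Finset.sum_sub_distrib]
    rw [Fintype.sum_prod_type]
    refine Finset.sum_congr rfl fun x _ => ?_
    rw [← Finset.sum_sub_distrib, Fintype.sum_prod_type]
    refine Finset.sum_congr rfl fun h _ => ?_
    rw [← Finset.sum_sub_distrib]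
    refine Finset.sum_congr rfl fun g _ => ?_
    by_cases hg : g = midRestrict hlk hkn h x
    · simp [hAA, hBB, hg, rTr]
    · simp only [hAA, hBB, if_neg hg]
      rw [key1 _ _ _ (T.psd _ _) (V.psd _ _), sub_zero]
  have eBB : ∑ c, rTr (BB c * (BB c)ᴴ * ρ) =
      ∑ x : Fin n → F, ∑ h : (Fin k → F) → F, ∑ g : (Fin l → F) → F,
        if g ≠ midRestrict hlk hkn h x then
          rTr ((T.P (xgt k hkn x) h ⊗ₖ V.P (xgt l (hlk.trans hkn) x) g) * ρ)
        else 0 := by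
    rw [Fintype.sum_prod_type]
    refine Finset.sum_congr rfl fun x _ => ?_
    rw [Fintype.sum_prod_type]
    refine Finset.sum_congr rfl fun h _ => ?_
    refine Finset.sum_congr rfl fun g _ => ?_
    by_cases hg : g = midRestrict hlk hkn h x
    · simp [hBB, hg, rTr]
    · simp only [hBB, if_neg hg]
      rw [key3 _ _ (T.psd _ _) (V.psd _ _), if_pos hg]
  have hQnn : (0:ℝ) ≤ ∑ c, rTr (BB c * (BB c)ᴴ * ρ) :=
    Finset.sum_nonneg fun c _ =>
      rTr_mul_psd_nonneg (Matrix.posSemidef_self_mul_conjTranspose _) hρ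
  -- bound on the A-part
  have hM : ∀ (x : Fin n → F) (h : (Fin k → F) → F),
      (Z (xgt k hkn x) h * T.P (xgt k hkn x) h * (Z (xgt k hkn x) h)ᴴ).PosSemidef :=
    fun x h => (T.psd _ _).mul_mul_conjTranspose_same _
  have hPle : ∑ c, rTr (AA c * (AA c)ᴴ * ρ) ≤ (Fintype.card F : ℝ) ^ n := by
    have hW := hZ
    unfold PSDle at hW
    have e2 : rTr (((∑ y : Fin (n - k) → F, ∑ h : (Fin k → F) → F,
        Z y h * (Z y h)ᴴ) ⊗ₖ (1 : Mat d)) * ρ) ≤ (Fintype.card F : ℝ) ^ (n - k) := by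
      have hinv : ((Fintype.card F : ℂ) ^ (n - k))⁻¹ =
          (((((Fintype.card F : ℝ) ^ (n - k))⁻¹ : ℝ)) : ℂ) := by push_cast; ring
      have h3 : rTr (((((Fintype.card F : ℂ) ^ (n - k))⁻¹ •
          ∑ y : Fin (n - k) → F, ∑ h : (Fin k → F) → F, Z y h * (Z y h)ᴴ) ⊗ₖ (1 : Mat d)) * ρ) ≤
          rTr ((((1 : Mat d)) ⊗ₖ (1 : Mat d)) * ρ) := by
        refine rTr_mul_mono hρ ?_
        rw [← kron_sub_left]
        exact kron_psd hW Matrix.PosSemidef.one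
      rw [Matrix.one_kronecker_one, Matrix.one_mul] at h3
      rw [smul_kron, Matrix.smul_mul, hinv, rTr_real_smul] at h3
      have hc : (0:ℝ) < (Fintype.card F : ℝ) ^ (n - k) := pow_pos cardF _
      calc rTr (((∑ y : Fin (n - k) → F, ∑ h : (Fin k → F) → F,
              Z y h * (Z y h)ᴴ) ⊗ₖ (1 : Mat d)) * ρ)
          = (Fintype.card F : ℝ) ^ (n - k) * (((Fintype.card F : ℝ) ^ (n - k))⁻¹ *
              rTr (((∑ y : Fin (n - k) → F, ∑ h : (Fin k → F) → F,
                Z y h * (Z y h)ᴴ) ⊗ₖ (1 : Mat d)) * ρ)) := by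
            field_simp
        _ ≤ (Fintype.card F : ℝ) ^ (n - k) * 1 :=
            mul_le_mul_of_nonneg_left (h3.trans hρ1) hc.le
        _ = (Fintype.card F : ℝ) ^ (n - k) := mul_one _
    have e1 : rTr (((∑ y : Fin (n - k) → F, ∑ h : (Fin k → F) → F,
        Z y h * (Z y h)ᴴ) ⊗ₖ (1 : Mat d)) * ρ) =
        ∑ y : Fin (n - k) → F, ∑ h : (Fin k → F) → F,
          rTr (((Z y h * (Z y h)ᴴ) ⊗ₖ (1 : Mat d)) * ρ) := by
      rw [kron_sum_left, Finset.sum_mul, rTr_sum]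
      refine Finset.sum_congr rfl fun y _ => ?_
      rw [kron_sum_left, Finset.sum_mul, rTr_sum]
    calc ∑ c, rTr (AA c * (AA c)ᴴ * ρ)
        = ∑ x : Fin n → F, ∑ h : (Fin k → F) → F, ∑ g : (Fin l → F) → F,
            (if g = midRestrict hlk hkn h x then 0 else
              rTr (((Z (xgt k hkn x) h * T.P (xgt k hkn x) h * (Z (xgt k hkn x) h)ᴴ) ⊗ₖ
                V.P (xgt l (hlk.trans hkn) x) g) * ρ)) := by
          rw [Fintype.sum_prod_type]
          refine Finset.sum_congr rfl fun x _ => ?_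
          rw [Fintype.sum_prod_type]
          refine Finset.sum_congr rfl fun h _ => ?_
          refine Finset.sum_congr rfl fun g _ => ?_
          by_cases hg : g = midRestrict hlk hkn h x
          · simp [hAA, hg, rTr]
          · simp only [hAA, if_neg hg]
            rw [key2 _ _ _ (T.psd _ _) (V.psd _ _)]
      _ ≤ ∑ x : Fin n → F, ∑ h : (Fin k → F) → F, ∑ g : (Fin l → F) → F,
            rTr (((Z (xgt k hkn x) h * T.P (xgt k hkn x) h * (Z (xgt k hkn x) h)ᴴ) ⊗ₖ
              V.P (xgt l (hlk.trans hkn) x) g) * ρ) := by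
          refine Finset.sum_le_sum fun x _ => Finset.sum_le_sum fun h _ =>
            Finset.sum_le_sum fun g _ => ?_
          have hnn : (0:ℝ) ≤ rTr (((Z (xgt k hkn x) h * T.P (xgt k hkn x) h *
              (Z (xgt k hkn x) h)ᴴ) ⊗ₖ V.P (xgt l (hlk.trans hkn) x) g) * ρ) :=
            rTr_mul_psd_nonneg (kron_psd (hM x h) (V.psd _ _)) hρ
          split <;> simp [hnn]
      _ = ∑ x : Fin n → F, ∑ h : (Fin k → F) → F,
            rTr (((Z (xgt k hkn x) h * T.P (xgt k hkn x) h * (Z (xgt k hkn x) h)ᴴ) ⊗ₖ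
              (∑ g : (Fin l → F) → F, V.P (xgt l (hlk.trans hkn) x) g)) * ρ) := by
          refine Finset.sum_congr rfl fun x _ => Finset.sum_congr rfl fun h _ => ?_
          rw [kron_sum_right, Finset.sum_mul, rTr_sum]
      _ ≤ ∑ x : Fin n → F, ∑ h : (Fin k → F) → F,
            rTr (((Z (xgt k hkn x) h * T.P (xgt k hkn x) h * (Z (xgt k hkn x) h)ᴴ) ⊗ₖ
              (1 : Mat d)) * ρ) := by
          refine Finset.sum_le_sum fun x _ => Finset.sum_le_sum fun h _ => ?_
          refine rTr_mul_mono hρ ?_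
          rw [← kron_sub_right]
          exact kron_psd (hM x h) (V.sub _)
      _ ≤ ∑ x : Fin n → F, ∑ h : (Fin k → F) → F,
            rTr (((Z (xgt k hkn x) h * (Z (xgt k hkn x) h)ᴴ) ⊗ₖ (1 : Mat d)) * ρ) := by
          refine Finset.sum_le_sum fun x _ => Finset.sum_le_sum fun h _ => ?_
          refine rTr_mul_mono hρ ?_
          rw [← kron_sub_left]
          refine kron_psd ?_ Matrix.PosSemidef.one
          have e3 : Z (xgt k hkn x) h * (Z (xgt k hkn x) h)ᴴ -
              Z (xgt k hkn x) h * T.P (xgt k hkn x) h * (Z (xgt k hkn x) h)ᴴ =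
              Z (xgt k hkn x) h * ((1 : Mat d) - T.P (xgt k hkn x) h) *
                (Z (xgt k hkn x) h)ᴴ := by
            noncomm_ring
          rw [e3]
          exact (one_sub_single_psd T _ h).mul_mul_conjTranspose_same _
      _ = (Fintype.card F : ℝ) ^ k * ∑ y : Fin (n - k) → F, ∑ h : (Fin k → F) → F,
            rTr (((Z y h * (Z y h)ᴴ) ⊗ₖ (1 : Mat d)) * ρ) :=
          sum_xgt hkn (fun y => ∑ h : (Fin k → F) → F,
            rTr (((Z y h * (Z y h)ᴴ) ⊗ₖ (1 : Mat d)) * ρ))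
      _ ≤ (Fintype.card F : ℝ) ^ k * (Fintype.card F : ℝ) ^ (n - k) := by
          refine mul_le_mul_of_nonneg_left ?_ (by positivity)
          rw [← e1]
          exact e2
      _ = (Fintype.card F : ℝ) ^ n := by
          rw [← pow_add, Nat.add_sub_cancel' hkn]
  -- finish
  rw [div_sub_div_same, ← eAB, abs_div, abs_of_pos hq, ← eBB]
  have hsq : (0:ℝ) < Real.sqrt ((Fintype.card F : ℝ) ^ n) := Real.sqrt_pos.mpr hq
  calc |∑ c, rTr (AA c * (BB c)ᴴ * ρ)| / (Fintype.card F : ℝ) ^ n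
      ≤ (Real.sqrt (∑ c, rTr (AA c * (AA c)ᴴ * ρ)) *
          Real.sqrt (∑ c, rTr (BB c * (BB c)ᴴ * ρ))) / (Fintype.card F : ℝ) ^ n :=
        (div_le_div_iff_of_pos_right hq).mpr hcs
    _ ≤ (Real.sqrt ((Fintype.card F : ℝ) ^ n) *
          Real.sqrt (∑ c, rTr (BB c * (BB c)ᴴ * ρ))) / (Fintype.card F : ℝ) ^ n :=
        (div_le_div_iff_of_pos_right hq).mpr
          (mul_le_mul_of_nonneg_right (Real.sqrt_le_sqrt hPle) (Real.sqrt_nonneg _))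
    _ = Real.sqrt (∑ c, rTr (BB c * (BB c)ᴴ * ρ)) / Real.sqrt ((Fintype.card F : ℝ) ^ n) := by
        rw [div_eq_div_iff hq.ne' hsq.ne']
        linear_combination Real.sqrt (∑ c, rTr (BB c * (BB c)ᴴ * ρ)) *
          Real.mul_self_sqrt hq.le
    _ = Real.sqrt ((∑ c, rTr (BB c * (BB c)ᴴ * ρ)) / (Fintype.card F : ℝ) ^ n) :=
        (Real.sqrt_div hQnn _).symm

end

end MIP
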